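/- Closing property of conjugate points, missing-line case: Let W ⊆ ℝ³ be a 2-dimensional subspace such that ⟨X,X⟩ ≠ 0 for every X ∈ W \ {0} (the line ℓ does not meet the conic C). Let P₁,…,P_{2n} ∈ W \ {0} have the closing property with respect to C, and let Q₁,…,Q_{2n} ∈ W be nonzero vectors with ⟨Pᵢ,Qᵢ⟩ = 0 for each i (Qᵢ is the conjugate point of Pᵢ on ℓ with respect to C). Then Q₁,…,Q_{2n} also have the closing property with respect to C. -/

import Mathlib

/-- Minkowski product on ℝ³. -/
def mink (X Y : Fin 3 → ℝ) : ℝ := X 0 * Y 0 + X 1 * Y 1 - X 2 * Y 2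

/-- The reversion map in the point `P` (with `⟨P,P⟩ ≠ 0`), as a linear map on
representing vectors: `M_P X = ⟨P,P⟩X − 2⟨X,P⟩P`. -/
def rev (P X : Fin 3 → ℝ) : Fin 3 → ℝ := mink P P • X - (2 * mink X P) • P

/-- `chain n P X = (M_{P n} ∘ ⋯ ∘ M_{P 1}) X`, the composition of the reversions in
`P 0, …, P (n-1)`, applied in this order. -/
def chain : (n : ℕ) → (Fin n → (Fin 3 → ℝ)) → (Fin 3 → ℝ) → (Fin 3 → ℝ)
  | 0, _, X => X
  | n + 1, P, X => rev (P (Fin.last n)) (chain n (fun i => P i.castSucc) X)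

/-- The points `P 0, …, P (n-1)` have the closing property with respect to the conic
`C` iff `M_{P n} ∘ ⋯ ∘ M_{P 1}` is a nonzero scalar multiple of the identity. -/
def closes (n : ℕ) (P : Fin n → (Fin 3 → ℝ)) : Prop :=
  ∃ c : ℝ, c ≠ 0 ∧ ∀ X, chain n P X = c • X

/-- Minkowski cross product: `mink (mcross a b) z = det (a, b, z)`. -/
def mcross (a b : Fin 3 → ℝ) : Fin 3 → ℝ :=
  ![a 1 * b 2 - a 2 * b 1, a 2 * b 0 - a 0 * b 2, -(a 0 * b 1 - a 1 * b 0)]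

lemma vec3_ext {f g : Fin 3 → ℝ} (h0 : f 0 = g 0) (h1 : f 1 = g 1) (h2 : f 2 = g 2) :
    f = g := by
  funext i; fin_cases i; exacts [h0, h1, h2]

lemma rev_apply (P X : Fin 3 → ℝ) (i : Fin 3) :
    rev P X i = mink P P * X i - (2 * mink X P) * P i := by
  simp [rev]

lemma mink_comm (a b : Fin 3 → ℝ) : mink a b = mink b a := by
  simp only [mink]; ring

lemma mink_mcross_left (a b : Fin 3 → ℝ) : mink (mcross a b) a = 0 := by
  simp only [mink, mcross]; norm_num [Matrix.cons_val_two, Matrix.tail_cons, Matrix.head_cons]; ring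

lemma mink_mcross_right (a b : Fin 3 → ℝ) : mink (mcross a b) b = 0 := by
  simp only [mink, mcross]; norm_num [Matrix.cons_val_two, Matrix.tail_cons, Matrix.head_cons]; ring

lemma mink_mcross_self (a b : Fin 3 → ℝ) :
    mink (mcross a b) (mcross a b) = (mink a b) ^ 2 - mink a a * mink b b := by
  simp only [mink, mcross]; norm_num [Matrix.cons_val_two, Matrix.tail_cons, Matrix.head_cons]; ring

lemma mink_smul_right (a b : Fin 3 → ℝ) (c : ℝ) : mink a (c • b) = c * mink a b := by
  simp only [mink, Pi.smul_apply, smul_eq_mul]; ring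

lemma mink_add_right (a b c : Fin 3 → ℝ) : mink a (b + c) = mink a b + mink a c := by
  simp only [mink, Pi.add_apply]; ring

lemma mcross_mcross (a b q : Fin 3 → ℝ) :
    mcross (mcross a b) q = mink b q • a - mink a q • b := by
  apply vec3_ext <;>
    · simp only [mink, mcross, Pi.sub_apply, Pi.smul_apply, smul_eq_mul]
      norm_num [Matrix.cons_val_two, Matrix.tail_cons, Matrix.head_cons]; ring

lemma mcross_self_mcross (a b : Fin 3 → ℝ) :
    mcross a (mcross a b) = mink a a • b - mink a b • a := by
  apply vec3_ext <;>
    · simp only [mink, mcross, Pi.sub_apply, Pi.smul_apply, smul_eq_mul]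
      norm_num [Matrix.cons_val_two, Matrix.tail_cons, Matrix.head_cons]; ring

lemma rev_smul_right (P X : Fin 3 → ℝ) (c : ℝ) : rev P (c • X) = c • rev P X := by
  apply vec3_ext <;>
    · simp only [rev_apply, Pi.smul_apply, smul_eq_mul, mink]
      ring

lemma rev_smul_left (P X : Fin 3 → ℝ) (c : ℝ) : rev (c • P) X = c ^ 2 • rev P X := by
  apply vec3_ext <;>
    · simp only [rev_apply, Pi.smul_apply, smul_eq_mul, mink]
      ring

lemma rev_comm {a b : Fin 3 → ℝ} (h : mink a b = 0) (X : Fin 3 → ℝ) :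
    rev a (rev b X) = rev b (rev a X) := by
  simp only [mink] at h
  funext i
  simp only [rev_apply, mink]
  linear_combination (4 * ((X 0 * b 0 + X 1 * b 1 - X 2 * b 2) * a i
    - (X 0 * a 0 + X 1 * a 1 - X 2 * a 2) * b i)) * h

lemma rev_rev_self (N X : Fin 3 → ℝ) : rev N (rev N X) = (mink N N) ^ 2 • X := by
  funext i
  simp only [rev_apply, Pi.smul_apply, smul_eq_mul, mink]
  ring

lemma rev_mcross {a b : Fin 3 → ℝ} (h : mink a b = 0) (X : Fin 3 → ℝ) :
    rev (mcross a b) X = rev a (rev b X) := by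
  simp only [mink] at h
  apply vec3_ext
  · simp only [rev_apply, mink, mcross]
    norm_num [Matrix.cons_val_two, Matrix.tail_cons, Matrix.head_cons]
    linear_combination (a 2 * b 2 * X 0 - 2 * a 2 * b 0 * X 2 - a 1 * b 1 * X 0
      + 2 * a 1 * b 0 * X 1 + 2 * a 0 * b 2 * X 2 - 2 * a 0 * b 1 * X 1
      - a 0 * b 0 * X 0) * h
  · simp only [rev_apply, mink, mcross]
    norm_num [Matrix.cons_val_two, Matrix.tail_cons, Matrix.head_cons]
    linear_combination (a 2 * b 2 * X 1 - 2 * a 2 * b 1 * X 2 + 2 * a 1 * b 2 * X 2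
      - a 1 * b 1 * X 1 - 2 * a 1 * b 0 * X 0 + 2 * a 0 * b 1 * X 0
      - a 0 * b 0 * X 1) * h
  · simp only [rev_apply, mink, mcross]
    norm_num [Matrix.cons_val_two, Matrix.tail_cons, Matrix.head_cons]
    linear_combination (a 2 * b 2 * X 2 - 2 * a 2 * b 1 * X 1 - 2 * a 2 * b 0 * X 0
      + 2 * a 1 * b 2 * X 1 - a 1 * b 1 * X 2 + 2 * a 0 * b 2 * X 0
      - a 0 * b 0 * X 2) * h

lemma mcross_zero_right (a : Fin 3 → ℝ) : mcross a 0 = 0 := by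
  funext i
  fin_cases i <;> simp [mcross]

lemma rev_iterate_smul (N : Fin 3 → ℝ) :
    ∀ (k : ℕ) (c : ℝ) (X : Fin 3 → ℝ), (rev N)^[k] (c • X) = c • (rev N)^[k] X
  | 0, c, X => rfl
  | k + 1, c, X => by
    rw [Function.iterate_succ_apply, Function.iterate_succ_apply,
      rev_smul_right, rev_iterate_smul N k]

lemma rev_iterate_comm {N p : Fin 3 → ℝ} (h : mink N p = 0) :
    ∀ (k : ℕ) (Y : Fin 3 → ℝ), rev p ((rev N)^[k] Y) = (rev N)^[k] (rev p Y)
  | 0, Y => rfl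
  | k + 1, Y => by
    rw [Function.iterate_succ_apply', Function.iterate_succ_apply',
      ← rev_iterate_comm h k Y, rev_comm (by rw [mink_comm]; exact h)]

lemma iterate_rev_two_mul (N : Fin 3 → ℝ) :
    ∀ (n : ℕ) (X : Fin 3 → ℝ), (rev N)^[2 * n] X = ((mink N N) ^ 2) ^ n • X
  | 0, X => by simp
  | n + 1, X => by
    have : 2 * (n + 1) = 2 * n + 2 := by ring
    rw [this, Function.iterate_add_apply]
    have h2 : (rev N)^[2] X = (mink N N) ^ 2 • X := by
      simp [Function.iterate_succ_apply, rev_rev_self]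
    rw [h2, rev_iterate_smul, iterate_rev_two_mul N n, smul_smul, pow_succ]
    ring_nf

lemma chain_key (N : Fin 3 → ℝ) :
    ∀ (m : ℕ) (P Q : Fin m → (Fin 3 → ℝ)) (s : Fin m → ℝ),
      (∀ i, mink N (P i) = 0) →
      (∀ i X, rev (Q i) X = s i • rev N (rev (P i) X)) →
      ∀ X, chain m Q X = (∏ i, s i) • (rev N)^[m] (chain m P X)
  | 0, P, Q, s, _, _, X => by simp [chain]
  | m + 1, P, Q, s, hP, hrel, X => by
    have ih := chain_key N m (fun i => P i.castSucc) (fun i => Q i.castSucc)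
      (fun i => s i.castSucc) (fun i => hP i.castSucc) (fun i => hrel i.castSucc)
    show rev (Q (Fin.last m)) (chain m (fun i => Q i.castSucc) X) = _
    rw [ih X, rev_smul_right, hrel (Fin.last m),
      rev_iterate_comm (hP (Fin.last m)) m, Fin.prod_univ_castSucc,
      Function.iterate_succ_apply']
    show _ = ((∏ i : Fin m, s i.castSucc) * s (Fin.last m)) •
      rev N ((rev N)^[m] (rev (P (Fin.last m)) (chain m (fun i => P i.castSucc) X)))
    rw [smul_smul, mul_comm]

/-- **Closing property of conjugate points, missing-line case.** If the line `W` does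
not meet the conic `C`, and the points `P 0, …, P (2n-1)` on `W` have the closing
property with respect to `C`, then so do their conjugate points `Q 0, …, Q (2n-1)` on
`W` (`⟨Pᵢ,Qᵢ⟩ = 0`). -/
theorem conjugate_points_closing_missing
    (W : Submodule ℝ (Fin 3 → ℝ)) (hdim : Module.finrank ℝ W = 2)
    (hmiss : ∀ X ∈ W, X ≠ 0 → mink X X ≠ 0)
    (n : ℕ) (P Q : Fin (2 * n) → (Fin 3 → ℝ))
    (hPW : ∀ i, P i ∈ W) (hP0 : ∀ i, P i ≠ 0)
    (hclose : closes (2 * n) P)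
    (hQW : ∀ i, Q i ∈ W) (hQ0 : ∀ i, Q i ≠ 0)
    (hconj : ∀ i, mink (P i) (Q i) = 0) :
    closes (2 * n) Q := by
  obtain ⟨c₀, hc₀, hchain⟩ := hclose
  -- a basis of W
  have bW := Module.finBasisOfFinrankEq ℝ W hdim
  set u : Fin 3 → ℝ := ↑(bW 0) with hu_def
  set v : Fin 3 → ℝ := ↑(bW 1) with hv_def
  have hu : u ∈ W := (bW 0).2
  have hv : v ∈ W := (bW 1).2
  have hu0 : u ≠ 0 := by
    simpa [hu_def, Submodule.coe_eq_zero] using bW.ne_zero 0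
  have huu : mink u u ≠ 0 := hmiss u hu hu0
  -- independence
  have li : LinearIndependent ℝ (fun i : Fin 2 => ((bW i : W) : Fin 3 → ℝ)) :=
    bW.linearIndependent.map' W.subtype (Submodule.ker_subtype W)
  have hindep : ∀ r t : ℝ, r • u + t • v = 0 → r = 0 ∧ t = 0 := by
    intro r t hrt
    have := Fintype.linearIndependent_iff.mp li ![r, t] (by
      simpa [Fin.sum_univ_two] using hrt)
    exact ⟨this 0, this 1⟩
  -- spanning
  have hmem : ∀ x ∈ W, ∃ r t : ℝ, x = r • u + t • v := by
    intro x hx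
    have h := congrArg (Subtype.val) (bW.sum_repr ⟨x, hx⟩)
    rw [Fin.sum_univ_two] at h
    exact ⟨bW.repr ⟨x, hx⟩ 0, bW.repr ⟨x, hx⟩ 1, by
      simpa using h.symm⟩
  set N : Fin 3 → ℝ := mcross u v with hN_def
  have hN : ∀ x ∈ W, mink N x = 0 := by
    intro x hx
    obtain ⟨r, t, rfl⟩ := hmem x hx
    rw [mink_add_right, mink_smul_right, mink_smul_right,
      mink_mcross_left, mink_mcross_right]
    ring
  -- mink N N ≠ 0
  have hnn : mink N N ≠ 0 := by
    rw [hN_def, mink_mcross_self]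
    intro h0
    set Xv : Fin 3 → ℝ := mink u v • u + (-(mink u u)) • v with hXv_def
    have hXvW : Xv ∈ W := W.add_mem (W.smul_mem _ hu) (W.smul_mem _ hv)
    have hXvm : mink Xv Xv = 0 := by
      rw [hXv_def]
      simp only [mink, Pi.add_apply, Pi.smul_apply, smul_eq_mul]
      simp only [mink] at h0
      linear_combination (-(u 0 * u 0 + u 1 * u 1 - u 2 * u 2)) * h0
    by_cases hXv0 : Xv = 0
    · have := hindep _ _ (hXv_def ▸ hXv0)
      exact huu (by linarith [this.2])
    · exact hmiss Xv hXvW hXv0 hXvm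
  -- conjugate points are multiples of mcross N (P i)
  set t : Fin (2 * n) → ℝ := fun i =>
    mink (mcross N (P i)) (Q i) / mink (mcross N (P i)) (mcross N (P i)) with ht_def
  have hkey : ∀ i, Q i = t i • mcross N (P i) := by
    intro i
    set c := mcross N (P i) with hc_def
    have hNP : mink N (P i) = 0 := hN _ (hPW i)
    have hcc : mink c c ≠ 0 := by
      rw [hc_def, mink_mcross_self, hNP]
      simpa using mul_ne_zero hnn (hmiss _ (hPW i) (hP0 i))
    have hcQ : mcross c (Q i) = 0 := by
      rw [hc_def, mcross_mcross, hconj i, hN _ (hQW i)]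
      simp
    have h2 : mink c c • Q i - mink c (Q i) • c = 0 := by
      rw [← mcross_self_mcross, hcQ, mcross_zero_right]
    have h3 : mink c c • Q i = mink c (Q i) • c := by
      rwa [sub_eq_zero] at h2
    show Q i = (mink c (Q i) / mink c c) • c
    rw [div_eq_mul_inv, mul_comm, mul_smul, ← h3, smul_smul, inv_mul_cancel₀ hcc,
      one_smul]
  have ht0 : ∀ i, t i ≠ 0 := by
    intro i hti
    exact hQ0 i (by rw [hkey i, hti, zero_smul])
  have hrel : ∀ i X, rev (Q i) X = (t i) ^ 2 • rev N (rev (P i) X) := by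
    intro i X
    rw [hkey i, rev_smul_left, rev_mcross (hN _ (hPW i))]
  have hfin := chain_key N (2 * n) P Q (fun i => (t i) ^ 2)
    (fun i => hN _ (hPW i)) hrel
  refine ⟨(∏ i, (t i) ^ 2) * (c₀ * ((mink N N) ^ 2) ^ n), ?_, ?_⟩
  · refine mul_ne_zero ?_ (mul_ne_zero hc₀ (pow_ne_zero _ (pow_ne_zero _ hnn)))
    exact Finset.prod_ne_zero_iff.mpr fun i _ => pow_ne_zero _ (ht0 i)
  · intro X
    rw [hfin X, hchain X, rev_iterate_smul, iterate_rev_two_mul, smul_smul, smul_smul,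
      mul_assoc]
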